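/- Let P be a poset on [n], E an equivalence relation on I(P) with dual relation E*, 𝔽_q a finite field, and χ a nontrivial additive character of 𝔽_q. Let I, J be order ideals of P, and assume: (a) Σ_{v ∈ S_{J̄^c,E*}} χ(u·v) has the same value for all u ∈ S_{Ī,E}; (b) Σ_{u ∈ S_{Ī,E}} χ(u·v) has the same value for all v ∈ S_{J̄^c,E*}; (c) every order ideal L with (L,I) ∈ E satisfies |M(L)| = |M(I)| and |L_M| = |I_M|; (d) every order ideal K with (K,J) ∈ E satisfies |M(K^c)| = |M(J^c)| and |(K^c)_M| = |(J^c)_M|. Let N_I = #{L ∈ I(P) : (L,I) ∈ E} and N_J = #{K ∈ I(P) : (K,J) ∈ E}. Then for any u ∈ S_{Ī,E} and v ∈ S_{J̄^c,E*}: N_I · (q−1)^{|M(I)|} q^{|I_M|} · Σ_{v' ∈ S_{J̄^c,E*}} χ(u·v') = N_J · (q−1)^{|M(J^c)|} q^{|(J^c)_M|} · Σ_{u' ∈ S_{Ī,E}} χ(u'·v). (Proposition 3.10.) -/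

import Mathlib

open scoped BigOperators
open Finset

noncomputable section
open scoped Classical

/-- `I ⊆ [n]` is an order ideal with respect to the order relation `le`. -/
def IsIdeal {n : ℕ} (le : Fin n → Fin n → Prop) (I : Finset (Fin n)) : Prop :=
  ∀ a ∈ I, ∀ b, le b a → b ∈ I

/-- `⟨X⟩_P` : the smallest order ideal (w.r.t. `le`) containing `X`. -/
def idealCl {n : ℕ} (le : Fin n → Fin n → Prop) (X : Finset (Fin n)) : Finset (Fin n) :=
  Finset.univ.filter fun b => ∃ a ∈ X, le b a

/-- `M(A)` : the set of maximal elements of `A` with respect to `le`. -/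
def maxSet {n : ℕ} (le : Fin n → Fin n → Prop) (A : Finset (Fin n)) : Finset (Fin n) :=
  A.filter fun a => ∀ b ∈ A, le a b → b = a

/-- `E` is an equivalence relation on the set of order ideals of the poset `le`. -/
def EqvOnIdeals {n : ℕ} (le : Fin n → Fin n → Prop)
    (E : Finset (Fin n) → Finset (Fin n) → Prop) : Prop :=
  (∀ I J, E I J → IsIdeal le I ∧ IsIdeal le J) ∧
  (∀ I, IsIdeal le I → E I I) ∧
  (∀ I J, E I J → E J I) ∧
  (∀ I J K, E I J → E J K → E I K)

/-- support of a vector -/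
def supp {n : ℕ} {F : Type} [Field F] [Fintype F] (v : Fin n → F) : Finset (Fin n) :=
  Finset.univ.filter fun i => v i ≠ 0

/-- standard dot product -/
def dot {n : ℕ} {F : Type} [Field F] [Fintype F] (u v : Fin n → F) : F := ∑ i, u i * v i

/-- the sphere `S_I = {v : ⟨supp v⟩_P = I}` -/
def sph {n : ℕ} (F : Type) [Field F] [Fintype F] (le : Fin n → Fin n → Prop)
    (I : Finset (Fin n)) : Finset (Fin n → F) :=
  Finset.univ.filter fun v => idealCl le (supp v) = I

/-- the dual sphere `S_{J^c} = {v : ⟨supp v⟩_{P*} = J^c}` -/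
def sphD {n : ℕ} (F : Type) [Field F] [Fintype F] (le : Fin n → Fin n → Prop)
    (J : Finset (Fin n)) : Finset (Fin n → F) :=
  Finset.univ.filter fun v => idealCl (fun a b => le b a) (supp v) = Jᶜ

/-- the `E`-sphere `S_{Ī,E} = {v : (⟨supp v⟩_P, I) ∈ E}` -/
def sphE {n : ℕ} (F : Type) [Field F] [Fintype F] (le : Fin n → Fin n → Prop)
    (E : Finset (Fin n) → Finset (Fin n) → Prop) (I : Finset (Fin n)) :
    Finset (Fin n → F) :=
  Finset.univ.filter fun v => E (idealCl le (supp v)) I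

/-- the `E*`-sphere `S_{J̄^c,E*} = {v : ⟨supp v⟩_{P*} = K^c for some ideal K with (K,J) ∈ E}` -/
def sphED {n : ℕ} (F : Type) [Field F] [Fintype F] (le : Fin n → Fin n → Prop)
    (E : Finset (Fin n) → Finset (Fin n) → Prop) (J : Finset (Fin n)) :
    Finset (Fin n → F) :=
  Finset.univ.filter fun v =>
    ∃ K, IsIdeal le K ∧ E K J ∧ idealCl (fun a b => le b a) (supp v) = Kᶜ

/-- the dual code `C^⊥` -/
def dualCode {n : ℕ} {F : Type} [Field F] [Fintype F] (C : Submodule F (Fin n → F)) :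
    Submodule F (Fin n → F) where
  carrier := {u | ∀ v ∈ C, dot u v = 0}
  zero_mem' := by intro v hv; simp [dot]
  add_mem' := by
    intro a b ha hb v hv
    have h1 := ha v hv
    have h2 := hb v hv
    simp only [dot, Pi.add_apply] at *
    simp [add_mul, Finset.sum_add_distrib, h1, h2]
  smul_mem' := by
    intro c a ha v hv
    have h1 := ha v hv
    simp only [dot, Pi.smul_apply, smul_eq_mul] at *
    simp [mul_assoc, ← Finset.mul_sum, h1]

/-- `A_{Ī,E}(C) = |C ∩ S_{Ī,E}|` -/
def AE {n : ℕ} {F : Type} [Field F] [Fintype F] (le : Fin n → Fin n → Prop)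
    (E : Finset (Fin n) → Finset (Fin n) → Prop)
    (C : Submodule F (Fin n → F)) (I : Finset (Fin n)) : ℕ :=
  ((sphE F le E I).filter fun v => v ∈ C).card

/-- `A_{J̄^c,E*}(D) = |D ∩ S_{J̄^c,E*}|` -/
def AED {n : ℕ} {F : Type} [Field F] [Fintype F] (le : Fin n → Fin n → Prop)
    (E : Finset (Fin n) → Finset (Fin n) → Prop)
    (D : Submodule F (Fin n → F)) (J : Finset (Fin n)) : ℕ :=
  ((sphED F le E J).filter fun v => v ∈ D).card

/-- `E` is a MacWilliams-type equivalence relation (w.r.t. the field `F`). -/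
def IsMacWilliamsType {n : ℕ} (F : Type) [Field F] [Fintype F]
    (le : Fin n → Fin n → Prop) (E : Finset (Fin n) → Finset (Fin n) → Prop) : Prop :=
  ∀ C₁ C₂ : Submodule F (Fin n → F),
    (∀ I, IsIdeal le I → AE le E C₁ I = AE le E C₂ I) →
    ∀ J, IsIdeal le J → AED le E (dualCode C₁) J = AED le E (dualCode C₂) J

/-- a hierarchical poset (ordinal sum of antichains) -/
def IsHierarchical {n : ℕ} (le : Fin n → Fin n → Prop) : Prop :=
  ∃ l : Fin n → ℕ, ∀ i j, (le i j ∧ i ≠ j) ↔ l i < l j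

/-- `σ` is an automorphism of the poset `le`. -/
def IsAut {n : ℕ} (le : Fin n → Fin n → Prop) (σ : Equiv.Perm (Fin n)) : Prop :=
  ∀ x y, le x y ↔ le (σ x) (σ y)

/-- `A` and `B` are order-isomorphic with the induced orders. -/
def OrdIso {n : ℕ} (le : Fin n → Fin n → Prop) (A B : Finset (Fin n)) : Prop :=
  ∃ e : {x // x ∈ A} ≃ {x // x ∈ B}, ∀ a b : {x // x ∈ A}, le ↑a ↑b ↔ le ↑(e a) ↑(e b)


lemma aux_exists_max {n : ℕ} (le : Fin n → Fin n → Prop) [IsPartialOrder (Fin n) le]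
    (L : Finset (Fin n)) : ∀ k (a : Fin n), a ∈ L →
    (L.filter (fun c => le a c ∧ c ≠ a)).card ≤ k → ∃ b ∈ maxSet le L, le a b := by
  intro k
  induction k with
  | zero =>
    intro a ha h
    refine ⟨a, Finset.mem_filter.2 ⟨ha, ?_⟩, Std.Refl.refl a⟩
    intro b hb hab
    by_contra hne
    have : b ∈ L.filter (fun c => le a c ∧ c ≠ a) := Finset.mem_filter.2 ⟨hb, hab, hne⟩
    have := Finset.card_pos.2 ⟨b, this⟩
    omega
  | succ k ih =>
    intro a ha h
    by_cases hmax : ∀ b ∈ L, le a b → b = a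
    · exact ⟨a, Finset.mem_filter.2 ⟨ha, hmax⟩, Std.Refl.refl a⟩
    · push_neg at hmax
      obtain ⟨b, hbL, hab, hne⟩ := hmax
      have hss : (L.filter (fun c => le b c ∧ c ≠ b)) ⊂ (L.filter (fun c => le a c ∧ c ≠ a)) := by
        constructor
        · intro c hc
          obtain ⟨hcL, hbc, hcb⟩ := Finset.mem_filter.1 hc
          refine Finset.mem_filter.2 ⟨hcL, IsTrans.trans _ _ _ hab hbc, ?_⟩
          rintro rfl
          exact hne (Std.Antisymm.antisymm _ _ hbc hab)
        · intro hsub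
          have hb' : b ∈ L.filter (fun c => le a c ∧ c ≠ a) :=
            Finset.mem_filter.2 ⟨hbL, hab, hne⟩
          have := Finset.mem_filter.1 (hsub hb')
          exact this.2.2 rfl
      have hcard : (L.filter (fun c => le b c ∧ c ≠ b)).card ≤ k := by
        have := Finset.card_lt_card hss
        omega
      obtain ⟨m, hm, hbm⟩ := ih b hbL hcard
      exact ⟨m, hm, IsTrans.trans _ _ _ hab hbm⟩

lemma exists_max {n : ℕ} (le : Fin n → Fin n → Prop) [IsPartialOrder (Fin n) le]
    (L : Finset (Fin n)) {a : Fin n} (ha : a ∈ L) : ∃ b ∈ maxSet le L, le a b :=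
  aux_exists_max le L _ a ha le_rfl

lemma idealCl_isIdeal {n : ℕ} (le : Fin n → Fin n → Prop) [IsPartialOrder (Fin n) le]
    (X : Finset (Fin n)) : IsIdeal le (idealCl le X) := by
  intro a ha b hba
  obtain ⟨x, hx, hax⟩ := (Finset.mem_filter.1 ha).2
  exact Finset.mem_filter.2 ⟨Finset.mem_univ _, x, hx, IsTrans.trans _ _ _ hba hax⟩

lemma sph_card {n : ℕ} (F : Type) [Field F] [Fintype F] (le : Fin n → Fin n → Prop)
    [IsPartialOrder (Fin n) le] (L : Finset (Fin n)) (hL : IsIdeal le L) :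
    (sph F le L).card =
      (Fintype.card F - 1) ^ (maxSet le L).card *
        Fintype.card F ^ (L \ maxSet le L).card := by
  classical
  set M := maxSet le L with hMdef
  have hML : M ⊆ L := Finset.filter_subset _ _
  have hmem : ∀ v : Fin n → F, idealCl le (supp v) = L ↔ (M ⊆ supp v ∧ supp v ⊆ L) := by
    intro v
    constructor
    · intro h
      have hsupp : supp v ⊆ L := by
        intro i hi
        rw [← h]
        exact Finset.mem_filter.2 ⟨Finset.mem_univ _, i, hi, Std.Refl.refl i⟩
      refine ⟨?_, hsupp⟩
      intro b hb
      have hbL : b ∈ L := hML hb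
      rw [← h] at hbL
      obtain ⟨a, haS, hba⟩ := (Finset.mem_filter.1 hbL).2
      have : a = b := (Finset.mem_filter.1 hb).2 a (hsupp haS) hba
      exact this ▸ haS
    · rintro ⟨h1, h2⟩
      apply Finset.Subset.antisymm
      · intro c hc
        obtain ⟨a, haS, hca⟩ := (Finset.mem_filter.1 hc).2
        exact hL a (h2 haS) c hca
      · intro b hb
        obtain ⟨m, hm, hbm⟩ := exists_max le L hb
        exact Finset.mem_filter.2 ⟨Finset.mem_univ _, m, h1 hm, hbm⟩
  set t : Fin n → Finset F := fun i =>
    if i ∈ M then ({0}ᶜ : Finset F) else if i ∈ L then Finset.univ else {0} with htdef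
  have hsph : sph F le L = Fintype.piFinset t := by
    ext v
    simp only [sph, Finset.mem_filter, Finset.mem_univ, true_and, Fintype.mem_piFinset]
    rw [hmem v]
    constructor
    · rintro ⟨h1, h2⟩ i
      by_cases hiM : i ∈ M
      · have : v i ≠ 0 := (Finset.mem_filter.1 (h1 hiM)).2
        simp [htdef, hiM, this]
      · by_cases hiL : i ∈ L
        · simp [htdef, hiM, hiL]
        · have : v i = 0 := by
            by_contra hvi
            exact hiL (h2 (Finset.mem_filter.2 ⟨Finset.mem_univ _, hvi⟩))
          simp [htdef, hiM, hiL, this]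
    · intro h
      constructor
      · intro i hi
        have := h i
        simp only [htdef, hi, if_true] at this
        simp only [Finset.mem_compl, Finset.mem_singleton] at this
        exact Finset.mem_filter.2 ⟨Finset.mem_univ _, this⟩
      · intro i hi
        have hvi : v i ≠ 0 := (Finset.mem_filter.1 hi).2
        by_contra hiL
        have hiM : i ∉ M := fun h' => hiL (hML h')
        have := h i
        simp only [htdef, hiM, hiL, if_false] at this
        simp only [Finset.mem_singleton] at this
        exact hvi this
  rw [hsph, Fintype.card_piFinset]
  have hLU : L ⊆ (Finset.univ : Finset (Fin n)) := Finset.subset_univ L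
  rw [← Finset.prod_sdiff hLU, ← Finset.prod_sdiff hML]
  have h1 : ∀ i ∈ Finset.univ \ L, (t i).card = 1 := by
    intro i hi
    have hiL : i ∉ L := (Finset.mem_sdiff.1 hi).2
    have hiM : i ∉ M := fun h' => hiL (hML h')
    simp [htdef, hiM, hiL]
  have h2 : ∀ i ∈ L \ M, (t i).card = Fintype.card F := by
    intro i hi
    obtain ⟨hiL, hiM⟩ := Finset.mem_sdiff.1 hi
    simp [htdef, hiM, hiL]
  have h3 : ∀ i ∈ M, (t i).card = Fintype.card F - 1 := by
    intro i hi
    simp [htdef, hi, Finset.card_compl]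
  rw [Finset.prod_congr rfl h1, Finset.prod_congr rfl h2, Finset.prod_congr rfl h3]
  simp [Finset.prod_const, mul_comm]

lemma dual_partialOrder {n : ℕ} (le : Fin n → Fin n → Prop) [IsPartialOrder (Fin n) le] :
    IsPartialOrder (Fin n) (fun a b => le b a) where
  refl := fun a => Std.Refl.refl a
  trans := fun a b c h1 h2 => IsTrans.trans c b a h2 h1
  antisymm := fun a b h1 h2 => Std.Antisymm.antisymm a b h2 h1

lemma compl_isIdeal {n : ℕ} (le : Fin n → Fin n → Prop) {K : Finset (Fin n)}
    (hK : IsIdeal le K) : IsIdeal (fun a b => le b a) Kᶜ := by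
  intro a ha b hab
  simp only [Finset.mem_compl] at *
  exact fun hb => ha (hK b hb a hab)

lemma sphE_card {n : ℕ} (F : Type) [Field F] [Fintype F] (le : Fin n → Fin n → Prop)
    [IsPartialOrder (Fin n) le]
    (E : Finset (Fin n) → Finset (Fin n) → Prop)
    (hE1 : ∀ A B, E A B → IsIdeal le A ∧ IsIdeal le B) (I : Finset (Fin n))
    (hc : ∀ L : Finset (Fin n), E L I →
      (maxSet le L).card = (maxSet le I).card ∧
      (L \ maxSet le L).card = (I \ maxSet le I).card) :
    (sphE F le E I).card =
      (Finset.univ.filter fun L : Finset (Fin n) => IsIdeal le L ∧ E L I).card *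
        ((Fintype.card F - 1) ^ (maxSet le I).card *
          Fintype.card F ^ (I \ maxSet le I).card) := by
  classical
  have hbi : sphE F le E I =
      (Finset.univ.filter fun L : Finset (Fin n) => IsIdeal le L ∧ E L I).biUnion
        (fun L => sph F le L) := by
    ext v
    simp only [sphE, sph, Finset.mem_filter, Finset.mem_biUnion, Finset.mem_univ, true_and]
    constructor
    · intro h
      exact ⟨idealCl le (supp v), ⟨idealCl_isIdeal le _, h⟩, rfl⟩
    · rintro ⟨L, ⟨_, hLI⟩, rfl⟩
      exact hLI
  rw [hbi, Finset.card_biUnion]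
  · rw [Finset.sum_congr rfl (fun L hL => ?_), Finset.sum_const, smul_eq_mul]
    obtain ⟨hLid, hLI⟩ := (Finset.mem_filter.1 hL).2
    rw [sph_card F le L hLid, (hc L hLI).1, (hc L hLI).2]
  · intro L hL L' hL' hne
    rw [Function.onFun, Finset.disjoint_left]
    intro v hv hv'
    exact hne ((Finset.mem_filter.1 hv).2 ▸ (Finset.mem_filter.1 hv').2 ▸ rfl)

lemma sphED_card {n : ℕ} (F : Type) [Field F] [Fintype F] (le : Fin n → Fin n → Prop)
    [IsPartialOrder (Fin n) le]
    (E : Finset (Fin n) → Finset (Fin n) → Prop) (J : Finset (Fin n))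
    (hd : ∀ K : Finset (Fin n), E K J →
      (maxSet (fun a b => le b a) Kᶜ).card = (maxSet (fun a b => le b a) Jᶜ).card ∧
      (Kᶜ \ maxSet (fun a b => le b a) Kᶜ).card = (Jᶜ \ maxSet (fun a b => le b a) Jᶜ).card) :
    (sphED F le E J).card =
      (Finset.univ.filter fun K : Finset (Fin n) => IsIdeal le K ∧ E K J).card *
        ((Fintype.card F - 1) ^ (maxSet (fun a b => le b a) Jᶜ).card *
          Fintype.card F ^ (Jᶜ \ maxSet (fun a b => le b a) Jᶜ).card) := by
  classical
  haveI : IsPartialOrder (Fin n) (fun a b => le b a) := dual_partialOrder le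
  have hbi : sphED F le E J =
      (Finset.univ.filter fun K : Finset (Fin n) => IsIdeal le K ∧ E K J).biUnion
        (fun K => sph F (fun a b => le b a) Kᶜ) := by
    ext v
    simp only [sphED, sph, Finset.mem_filter, Finset.mem_biUnion, Finset.mem_univ, true_and]
    constructor
    · rintro ⟨K, h1, h2, h3⟩
      exact ⟨K, ⟨h1, h2⟩, h3⟩
    · rintro ⟨K, ⟨h1, h2⟩, h3⟩
      exact ⟨K, h1, h2, h3⟩
  rw [hbi, Finset.card_biUnion]
  · rw [Finset.sum_congr rfl (fun K hK => ?_), Finset.sum_const, smul_eq_mul]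
    obtain ⟨hKid, hKJ⟩ := (Finset.mem_filter.1 hK).2
    rw [sph_card F (fun a b => le b a) Kᶜ (compl_isIdeal le hKid), (hd K hKJ).1, (hd K hKJ).2]
  · intro K hK K' hK' hne
    rw [Function.onFun, Finset.disjoint_left]
    intro v hv hv'
    apply hne
    have : (Kᶜ : Finset (Fin n)) = K'ᶜ :=
      (Finset.mem_filter.1 hv).2 ▸ (Finset.mem_filter.1 hv').2 ▸ rfl
    simpa using congrArg (·ᶜ) this

/-- Proposition 3.10: the relation between the entries `p_{J̄^c,Ī}` and `q_{Ī,J̄^c}`. -/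
theorem stmt_12 {n : ℕ} (hn : 0 < n) (le : Fin n → Fin n → Prop)
    [IsPartialOrder (Fin n) le]
    (E : Finset (Fin n) → Finset (Fin n) → Prop) (hE : EqvOnIdeals le E)
    (F : Type) [Field F] [Fintype F] (χ : AddChar F ℂ) (hχ : ∃ a, χ a ≠ 1)
    (I J : Finset (Fin n)) (hI : IsIdeal le I) (hJ : IsIdeal le J)
    (ha : ∀ u ∈ sphE F le E I, ∀ u' ∈ sphE F le E I,
      ∑ v ∈ sphED F le E J, χ (dot u v) = ∑ v ∈ sphED F le E J, χ (dot u' v))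
    (hb : ∀ v ∈ sphED F le E J, ∀ v' ∈ sphED F le E J,
      ∑ u ∈ sphE F le E I, χ (dot u v) = ∑ u ∈ sphE F le E I, χ (dot u v'))
    (hc : ∀ L : Finset (Fin n), E L I →
      (maxSet le L).card = (maxSet le I).card ∧
      (L \ maxSet le L).card = (I \ maxSet le I).card)
    (hd : ∀ K : Finset (Fin n), E K J →
      (maxSet (fun a b => le b a) Kᶜ).card = (maxSet (fun a b => le b a) Jᶜ).card ∧
      (Kᶜ \ maxSet (fun a b => le b a) Kᶜ).card = (Jᶜ \ maxSet (fun a b => le b a) Jᶜ).card) :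
    ∀ u ∈ sphE F le E I, ∀ v ∈ sphED F le E J,
      ((Finset.univ.filter fun L : Finset (Fin n) => IsIdeal le L ∧ E L I).card : ℂ) *
        ((Fintype.card F : ℂ) - 1) ^ (maxSet le I).card *
        (Fintype.card F : ℂ) ^ (I \ maxSet le I).card *
        ∑ v' ∈ sphED F le E J, χ (dot u v') =
      ((Finset.univ.filter fun K : Finset (Fin n) => IsIdeal le K ∧ E K J).card : ℂ) *
        ((Fintype.card F : ℂ) - 1) ^ (maxSet (fun a b => le b a) Jᶜ).card *
        (Fintype.card F : ℂ) ^ (Jᶜ \ maxSet (fun a b => le b a) Jᶜ).card *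
        ∑ u' ∈ sphE F le E I, χ (dot u' v) := by

  classical
  intro u hu v hv
  have hq1 : ((Fintype.card F - 1 : ℕ) : ℂ) = (Fintype.card F : ℂ) - 1 :=
    by
    have h1 : 1 ≤ Fintype.card F := Fintype.card_pos
    exact_mod_cast Nat.cast_sub (R := ℂ) h1
  have hS := sphE_card F le E hE.1 I hc
  have hT := sphED_card F le E J hd
  have hScast : ((sphE F le E I).card : ℂ) =
      ((Finset.univ.filter fun L : Finset (Fin n) => IsIdeal le L ∧ E L I).card : ℂ) *
        (((Fintype.card F : ℂ) - 1) ^ (maxSet le I).card *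
          (Fintype.card F : ℂ) ^ (I \ maxSet le I).card) := by
    rw [hS]; push_cast [hq1]; ring
  have hTcast : ((sphED F le E J).card : ℂ) =
      ((Finset.univ.filter fun K : Finset (Fin n) => IsIdeal le K ∧ E K J).card : ℂ) *
        (((Fintype.card F : ℂ) - 1) ^ (maxSet (fun a b => le b a) Jᶜ).card *
          (Fintype.card F : ℂ) ^ (Jᶜ \ maxSet (fun a b => le b a) Jᶜ).card) := by
    rw [hT]; push_cast [hq1]; ring
  have hDouble : ((sphE F le E I).card : ℂ) * (∑ v' ∈ sphED F le E J, χ (dot u v')) =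
      ((sphED F le E J).card : ℂ) * ∑ u' ∈ sphE F le E I, χ (dot u' v) := by
    calc ((sphE F le E I).card : ℂ) * (∑ v' ∈ sphED F le E J, χ (dot u v'))
        = ∑ u' ∈ sphE F le E I, ∑ v' ∈ sphED F le E J, χ (dot u' v') := by
          rw [Finset.sum_congr rfl (fun u' hu' => ha u' hu' u hu), Finset.sum_const,
            nsmul_eq_mul]
      _ = ∑ v' ∈ sphED F le E J, ∑ u' ∈ sphE F le E I, χ (dot u' v') := Finset.sum_comm
      _ = ((sphED F le E J).card : ℂ) * ∑ u' ∈ sphE F le E I, χ (dot u' v) := by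
          rw [Finset.sum_congr rfl (fun v' hv' => hb v' hv' v hv), Finset.sum_const,
            nsmul_eq_mul]
  calc ((Finset.univ.filter fun L : Finset (Fin n) => IsIdeal le L ∧ E L I).card : ℂ) *
        ((Fintype.card F : ℂ) - 1) ^ (maxSet le I).card *
        (Fintype.card F : ℂ) ^ (I \ maxSet le I).card *
        ∑ v' ∈ sphED F le E J, χ (dot u v')
      = ((sphE F le E I).card : ℂ) * (∑ v' ∈ sphED F le E J, χ (dot u v')) := by
        rw [hScast]; ring
    _ = ((sphED F le E J).card : ℂ) * ∑ u' ∈ sphE F le E I, χ (dot u' v) := hDouble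
    _ = _ := by rw [hTcast]; ring

end
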